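/- The set of all products z_1 z_2 where z_1, z_2 ∈ ℂ satisfy |z_1 + 1| ≤ 1 and |z_2 + 1| ≤ 1 is equal to the set of all squares w² where w ∈ ℂ satisfies |w + 1| ≤ 1; equivalently, ℂ \ {−α_1 α_2 : |α_1 + 1| ≤ 1, |α_2 + 1| ≤ 1} = ℂ \ {−(1−α)² : |α| ≤ 1}. -/

import Mathlib

open Complex

lemma abs_add_one_le_iff' (z : ℂ) :
    ‖z + 1‖ ≤ 1 ↔ Complex.normSq z + 2 * z.re ≤ 0 := by
  have h : Complex.normSq (z + 1) = Complex.normSq z + 2 * z.re + 1 := by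
    simp [Complex.normSq_apply]; ring
  rw [Complex.norm_def, show (1:ℝ) = Real.sqrt 1 by simp,
    Real.sqrt_le_sqrt_iff (by norm_num : (0:ℝ) ≤ 1), h]
  constructor <;> intro <;> linarith

lemma key_sub (z₁ z₂ : ℂ) (h₁ : ‖z₁ + 1‖ ≤ 1) (h₂ : ‖z₂ + 1‖ ≤ 1) :
    ∃ w : ℂ, ‖w + 1‖ ≤ 1 ∧ z₁ * z₂ = w ^ 2 := by
  obtain ⟨s, hs⟩ := IsAlgClosed.exists_pow_nat_eq (k := ℂ) (z₁ * z₂) (by norm_num : 0 < 2)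
  set w : ℂ := if s.re ≤ 0 then s else -s with hw
  have hwre : w.re ≤ 0 := by
    by_cases h : s.re ≤ 0 <;> simp [hw, h] <;> linarith [not_le.mp h]
  have hwsq : w ^ 2 = z₁ * z₂ := by
    by_cases h : s.re ≤ 0 <;> simp [hw, h, neg_pow, hs]
  refine ⟨w, ?_, hwsq.symm⟩
  rw [abs_add_one_le_iff']
  -- notation
  set a₁ := z₁.re; set b₁ := z₁.im; set a₂ := z₂.re; set b₂ := z₂.im
  set r₁ := ‖z₁‖ with hr₁d
  set r₂ := ‖z₂‖ with hr₂d
  have hr₁ : 0 ≤ r₁ := norm_nonneg _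
  have hr₂ : 0 ≤ r₂ := norm_nonneg _
  have hn₁ : r₁ ^ 2 = a₁ ^ 2 + b₁ ^ 2 := by
    rw [hr₁d, Complex.sq_norm, Complex.normSq_apply]; ring
  have hn₂ : r₂ ^ 2 = a₂ ^ 2 + b₂ ^ 2 := by
    rw [hr₂d, Complex.sq_norm, Complex.normSq_apply]; ring
  rw [abs_add_one_le_iff'] at h₁ h₂
  have hc₁ : r₁ ^ 2 + 2 * a₁ ≤ 0 := by
    rw [hr₁d, Complex.sq_norm]; exact h₁
  have hc₂ : r₂ ^ 2 + 2 * a₂ ≤ 0 := by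
    rw [hr₂d, Complex.sq_norm]; exact h₂
  -- normSq w = r₁ * r₂
  have hnw : Complex.normSq w = r₁ * r₂ := by
    rw [← Complex.sq_norm, ← norm_pow, hwsq, norm_mul]
  -- 2 * w.re ^ 2 = r₁ r₂ + Re(z₁ z₂)
  have hre2 : 2 * w.re ^ 2 = r₁ * r₂ + (a₁ * a₂ - b₁ * b₂) := by
    have h1 : (w ^ 2).re = w.re ^ 2 - w.im ^ 2 := by
      rw [pow_two, Complex.mul_re]; ring
    have h2 : Complex.normSq w = w.re ^ 2 + w.im ^ 2 := by
      rw [Complex.normSq_apply]; ring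
    have h3 : (w ^ 2).re = a₁ * a₂ - b₁ * b₂ := by
      rw [hwsq, Complex.mul_re]
    have := hnw
    linarith [h1, h2, h3, this]
  -- Cauchy-Schwarz : a₁ a₂ + b₁ b₂ ≤ r₁ r₂
  have hcs : a₁ * a₂ + b₁ * b₂ ≤ r₁ * r₂ := by
    nlinarith [sq_nonneg (a₁ * b₂ - a₂ * b₁), mul_nonneg hr₁ hr₂,
      sq_nonneg (r₁ * r₂ - (a₁ * a₂ + b₁ * b₂)), sq_nonneg (r₁ * r₂ + (a₁ * a₂ + b₁ * b₂))]
  -- 4 a₁ a₂ ≥ r₁² r₂²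
  have h4a : r₁ ^ 2 * r₂ ^ 2 ≤ 4 * (a₁ * a₂) := by
    nlinarith [sq_nonneg r₁, sq_nonneg r₂]
  -- so 4 w.re² ≥ r₁² r₂², w.re ≤ 0 gives -2 w.re ≥ r₁ r₂
  have hfin : r₁ * r₂ + 2 * w.re ≤ 0 := by
    nlinarith [mul_nonneg hr₁ hr₂, sq_nonneg (r₁ * r₂ + 2 * w.re)]
  rw [hnw]
  linarith

theorem products_eq_squares_cardioid :
    ({x : ℂ | ∃ z₁ z₂ : ℂ, ‖z₁ + 1‖ ≤ 1 ∧ ‖z₂ + 1‖ ≤ 1 ∧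
        x = z₁ * z₂} =
      {x : ℂ | ∃ w : ℂ, ‖w + 1‖ ≤ 1 ∧ x = w ^ 2}) ∧
    ({x : ℂ | ∃ α₁ α₂ : ℂ, ‖α₁ + 1‖ ≤ 1 ∧ ‖α₂ + 1‖ ≤ 1 ∧
        x = -(α₁ * α₂)}ᶜ =
      {x : ℂ | ∃ α : ℂ, ‖α‖ ≤ 1 ∧ x = -(1 - α) ^ 2}ᶜ) := by
  have h1 : {x : ℂ | ∃ z₁ z₂ : ℂ, ‖z₁ + 1‖ ≤ 1 ∧ ‖z₂ + 1‖ ≤ 1 ∧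
        x = z₁ * z₂} =
      {x : ℂ | ∃ w : ℂ, ‖w + 1‖ ≤ 1 ∧ x = w ^ 2} := by
    ext x
    simp only [Set.mem_setOf_eq]
    constructor
    · rintro ⟨z₁, z₂, hz₁, hz₂, rfl⟩
      obtain ⟨w, hw, hweq⟩ := key_sub z₁ z₂ hz₁ hz₂
      exact ⟨w, hw, hweq⟩
    · rintro ⟨w, hw, rfl⟩
      exact ⟨w, w, hw, hw, (sq w).symm ▸ by ring⟩
  refine ⟨h1, ?_⟩
  congr 1
  ext x
  simp only [Set.mem_setOf_eq]
  constructor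
  · rintro ⟨α₁, α₂, h₁, h₂, rfl⟩
    have : α₁ * α₂ ∈ {x : ℂ | ∃ w : ℂ, ‖w + 1‖ ≤ 1 ∧ x = w ^ 2} := by
      rw [← h1]; exact ⟨α₁, α₂, h₁, h₂, rfl⟩
    obtain ⟨w, hw, hweq⟩ := this
    refine ⟨w + 1, by simpa using hw, ?_⟩
    rw [hweq]; ring_nf
  · rintro ⟨α, hα, rfl⟩
    have : ((1 - α) ^ 2 : ℂ) ∈ {x : ℂ | ∃ z₁ z₂ : ℂ, ‖z₁ + 1‖ ≤ 1 ∧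
        ‖z₂ + 1‖ ≤ 1 ∧ x = z₁ * z₂} := by
      rw [h1]
      exact ⟨α - 1, by simpa using hα, by ring⟩
    obtain ⟨z₁, z₂, h₁, h₂, hz⟩ := this
    exact ⟨z₁, z₂, h₁, h₂, by rw [hz]⟩
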